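/- Let G be a locally indicable group with Hughes-free division ring D_FG and N ⊴ G a normal subgroup of finite index. Then D_FG is generated as a ring by D_FN together with the image of FG; i.e., D_FG equals the crossed product D_FN * (G/N). -/

import Mathlib

/-- The division closure of a subset `s` of a division ring `D`: the smallest subring of
`D` containing `s` and closed under inverses. -/
def divClosure {D : Type*} [DivisionRing D] (s : Set D) : Subring D :=
  sInf {S : Subring D | s ⊆ S ∧ ∀ x ∈ S, x⁻¹ ∈ S}

/-- A group is locally indicable if every nontrivial finitely generated subgroup admits
a surjection onto `ℤ`. -/
def LocallyIndicable (G : Type*) [Group G] : Prop :=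
  ∀ H : Subgroup G, H ≠ ⊥ → H.FG →
    ∃ ψ : ↥H →* Multiplicative ℤ, Function.Surjective ψ

/-- The pair `(D, φ)` is a Hughes-free division ring of the group ring `FG`:
`D` is the division ring generated by `φ(FG)`, and for every nontrivial finitely
generated subgroup `H ≤ G`, every normal subgroup `N ⊴ H` with `H/N ≅ ℤ`, and all
`h₁, …, hₙ ∈ H` in pairwise distinct cosets of `N`, the sum
`⟨φ(FN)⟩ φ(h₁) + ⋯ + ⟨φ(FN)⟩ φ(hₙ)` is direct. -/
def IsHughesFree {F G D : Type*} [DivisionRing F] [Group G] [DivisionRing D]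
    (φ : MonoidAlgebra F G →+* D) : Prop :=
  divClosure (Set.range φ) = ⊤ ∧
  ∀ H : Subgroup G, H ≠ ⊥ → H.FG →
    ∀ N : Subgroup G, N ≤ H →
      (∃ ψ : ↥H →* Multiplicative ℤ, Function.Surjective ψ ∧
        ∀ x : ↥H, ψ x = 1 ↔ (x : G) ∈ N) →
      ∀ (n : ℕ) (h : Fin n → G), (∀ i, h i ∈ H) →
        (∀ i j, i ≠ j → (h i)⁻¹ * h j ∉ N) →
        ∀ α : Fin n → D,
          (∀ i, α i ∈ divClosure
            (φ '' {p : MonoidAlgebra F G | ∀ g ∈ p.coeff.support, g ∈ N})) →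
          (∑ i, α i * φ (MonoidAlgebra.of F G (h i))) = 0 →
          ∀ i, α i = 0

section Aux

variable {D : Type*} [DivisionRing D]

theorem mem_divClosure_of_mem {s : Set D} {x : D} (hx : x ∈ s) : x ∈ divClosure s := by
  rw [divClosure, Subring.mem_sInf]
  exact fun S hS => hS.1 hx

theorem inv_mem_divClosure {s : Set D} {x : D} (hx : x ∈ divClosure s) :
    x⁻¹ ∈ divClosure s := by
  rw [divClosure, Subring.mem_sInf] at hx ⊢
  exact fun S hS => hS.2 x (hx S hS)

theorem divClosure_le {s : Set D} {S : Subring D} (h1 : s ⊆ S) (h2 : ∀ x ∈ S, x⁻¹ ∈ S) :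
    divClosure s ≤ S := sInf_le ⟨h1, h2⟩

/-- The division closure bundled as a subfield (sub-division-ring). -/
def divSubfield (s : Set D) : Subfield D :=
  { divClosure s with inv_mem' := fun _ hx => inv_mem_divClosure hx }

@[simp] theorem mem_divSubfield {s : Set D} {x : D} :
    x ∈ divSubfield s ↔ x ∈ divClosure s := Iff.rfl

end Aux

/-- Let `G` be a locally indicable group with Hughes-free division ring `D_FG` and
`N ⊴ G` a normal subgroup of finite index.  Then `D_FG` is generated as a ring by
`D_FN` (the division closure of `φ(FN)`) together with the image of `FG`; that is,
`D_FG` equals the crossed product `D_FN * (G/N)`. -/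
theorem hughesFree_eq_crossedProduct_of_finiteIndex
    {F G D : Type*} [DivisionRing F] [Group G] [DivisionRing D]
    (φ : MonoidAlgebra F G →+* D)
    (hLI : LocallyIndicable G) (hHF : IsHughesFree φ)
    (N : Subgroup G) [N.Normal] [N.FiniteIndex] :
    Subring.closure
        ((divClosure (φ '' {p : MonoidAlgebra F G | ∀ g ∈ p.coeff.support, g ∈ N}) : Subring D)
            ∪ Set.range φ) = ⊤ := by
  classical
  obtain ⟨h1, -⟩ := hHF
  set sN : Set (MonoidAlgebra F G) := {p | ∀ g ∈ p.coeff.support, g ∈ N} with hsN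
  set E : Subfield D := divSubfield (φ '' sN) with hE
  set o : G → D := fun g => φ (MonoidAlgebra.of F G g) with ho
  -- basic multiplicativity
  have hof : ∀ g g' : G, o g * o g' = o (g * g') := fun g g' => by
    rw [ho, ← map_mul, ← map_mul]
  have hone : o 1 = 1 := by rw [ho]; simp only [map_one]
  have hunit : ∀ g : G, o g * o g⁻¹ = 1 := fun g => by rw [hof, mul_inv_cancel, hone]
  have hunit' : ∀ g : G, o g⁻¹ * o g = 1 := fun g => by rw [hof, inv_mul_cancel, hone]
  have hne : ∀ g : G, o g ≠ 0 := fun g => left_ne_zero_of_mul_eq_one (hunit g)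
  -- membership of group-ring elements supported in N
  have hEN : ∀ n : G, n ∈ N → o n ∈ E := by
    intro n hn
    refine mem_divClosure_of_mem ⟨MonoidAlgebra.single n 1, ?_, rfl⟩
    intro g hg
    rcases Finset.mem_singleton.mp (Finsupp.support_single_subset hg) with rfl
    exact hn
  have hEsingle : ∀ c : F, φ (MonoidAlgebra.single 1 c) ∈ E := by
    intro c
    refine mem_divClosure_of_mem ⟨MonoidAlgebra.single 1 c, ?_, rfl⟩
    intro g hg
    rcases Finset.mem_singleton.mp (Finsupp.support_single_subset hg) with rfl
    exact N.one_mem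
  -- conjugation by o g preserves E
  have hconj : ∀ (g : G) (k : D), k ∈ E → o g * k * o g⁻¹ ∈ E := by
    intro g k hk
    have hcan : ∀ x : D, o g⁻¹ * (o g * x) = x := fun x => by
      rw [← mul_assoc, hunit', one_mul]
    let c : D →+* D :=
      { toFun := fun d => o g * d * o g⁻¹
        map_one' := by rw [mul_one, hunit]
        map_mul' := fun a b => by
          simp only [mul_assoc, hcan]
        map_zero' := by rw [mul_zero, zero_mul]
        map_add' := fun a b => by rw [mul_add, add_mul] }
    have hsub : divClosure (φ '' sN) ≤ (Subfield.comap c E).toSubring := by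
      refine divClosure_le ?_ (fun x hx => (Subfield.comap c E).inv_mem hx)
      rintro - ⟨p, hp, rfl⟩
      have hcφ : c (φ p) = φ (MonoidAlgebra.of F G g * p * MonoidAlgebra.of F G g⁻¹) := by
        simp only [c, RingHom.coe_mk, MonoidHom.coe_mk, OneHom.coe_mk, map_mul, ho]
      have hq : (MonoidAlgebra.of F G g * p * MonoidAlgebra.of F G g⁻¹) ∈ sN := by
        intro a ha
        rw [Finsupp.mem_support_iff] at ha
        have hval : (MonoidAlgebra.of F G g * p * MonoidAlgebra.of F G g⁻¹).coeff a
            = p.coeff (g⁻¹ * (a * (g⁻¹)⁻¹)) := by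
          rw [MonoidAlgebra.of_apply, MonoidAlgebra.of_apply,
            MonoidAlgebra.coeff_mul_single_apply, MonoidAlgebra.coeff_single_mul_apply, one_mul, mul_one]
        rw [hval] at ha
        have hmem : g⁻¹ * (a * (g⁻¹)⁻¹) ∈ N := hp _ (Finsupp.mem_support_iff.mpr ha)
        have := (‹N.Normal›).conj_mem _ hmem g
        simpa [mul_assoc] using this
      show c (φ p) ∈ E
      rw [hcφ]
      exact mem_divClosure_of_mem ⟨_, hq, rfl⟩
    exact hsub hk
  have hmove : ∀ (g : G) (k : D), k ∈ E → ∃ k' ∈ E, o g * k = k' * o g := by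
    intro g k hk
    refine ⟨o g * k * o g⁻¹, hconj g k hk, ?_⟩
    rw [mul_assoc, hunit', mul_one]
  -- the finite-dimensional E-module M
  set r : G ⧸ N → G := Quotient.out with hr
  set M : Submodule E D := Submodule.span E (Set.range fun q : G ⧸ N => o (r q)) with hM
  have hsmul : ∀ (k : ↥E) (d : D), k • d = (k : D) * d := fun k d => rfl
  have hMg : ∀ g : G, o g ∈ M := by
    intro g
    have hrep : (r (QuotientGroup.mk g))⁻¹ * g ∈ N := by
      rw [← QuotientGroup.eq]
      exact (QuotientGroup.out_eq' (QuotientGroup.mk (s := N) g))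
    have hrep' : g * (r (QuotientGroup.mk g))⁻¹ ∈ N := by
      have := (‹N.Normal›).conj_mem _ hrep (r (QuotientGroup.mk g))
      simpa [mul_assoc] using this
    have : o g = (⟨o (g * (r (QuotientGroup.mk g))⁻¹), hEN _ hrep'⟩ : ↥E) •
        o (r (QuotientGroup.mk g)) := by
      rw [hsmul, hof]
      congr 1
      group
    rw [this]
    exact Submodule.smul_mem _ _ (Submodule.subset_span ⟨_, rfl⟩)
  have hone_mem : (1 : D) ∈ M := hone ▸ hMg 1
  -- E ⊆ M
  have hEM : ∀ k : D, k ∈ E → k ∈ M := by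
    intro k hk
    have : k = (⟨k, hk⟩ : ↥E) • (1 : D) := by rw [hsmul, mul_one]
    rw [this]
    exact Submodule.smul_mem _ _ hone_mem
  -- M is multiplicatively closed
  have hgenmul : ∀ (g : G), ∀ b ∈ M, o g * b ∈ M := by
    intro g b hb
    induction hb using Submodule.span_induction with
    | mem x hx =>
        rcases hx with ⟨q, rfl⟩
        rw [hof]
        exact hMg _
    | zero => rw [mul_zero]; exact M.zero_mem
    | add x y _ _ hx hy => rw [mul_add]; exact M.add_mem hx hy
    | smul k x _ hx =>
        rcases hmove g k k.2 with ⟨k', hk', hkk'⟩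
        have : o g * (k • x) = (⟨k', hk'⟩ : ↥E) • (o g * x) := by
          rw [hsmul, hsmul, ← mul_assoc, hkk', mul_assoc]
        rw [this]
        exact Submodule.smul_mem _ _ hx
  have hmul : ∀ a ∈ M, ∀ b ∈ M, a * b ∈ M := by
    intro a ha b hb
    induction ha using Submodule.span_induction with
    | mem x hx =>
        rcases hx with ⟨q, rfl⟩
        exact hgenmul _ b hb
    | zero => rw [zero_mul]; exact M.zero_mem
    | add x y _ _ hx hy => rw [add_mul]; exact M.add_mem hx hy
    | smul k x _ hx =>
        have : (k • x) * b = k • (x * b) := by rw [hsmul, hsmul, mul_assoc]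
        rw [this]
        exact Submodule.smul_mem _ _ hx
  -- range φ ⊆ M
  have hrange : ∀ p : MonoidAlgebra F G, φ p ∈ M := by
    intro p
    have hps : p = ∑ g ∈ p.coeff.support, MonoidAlgebra.single g (p.coeff g) :=
      (MonoidAlgebra.sum_coeff_single p).symm
    rw [hps, map_sum]
    refine Submodule.sum_mem _ fun g _ => ?_
    have hsg : MonoidAlgebra.single g (p.coeff g)
        = MonoidAlgebra.single (1 : G) (p.coeff g) * MonoidAlgebra.single g (1 : F) := by
      rw [MonoidAlgebra.single_mul_single, one_mul, mul_one]
    have : φ (MonoidAlgebra.single g (p.coeff g))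
        = (⟨φ (MonoidAlgebra.single 1 (p.coeff g)), hEsingle _⟩ : ↥E) • o g := by
      rw [hsmul, hsg, map_mul]; rfl
    rw [this]
    exact Submodule.smul_mem _ _ (hMg g)
  -- M as a subring
  set S : Subring D :=
    { carrier := (M : Set D)
      one_mem' := hone_mem
      mul_mem' := fun {a b} ha hb => hmul a ha b hb
      zero_mem' := M.zero_mem
      add_mem' := fun {a b} ha hb => M.add_mem ha hb
      neg_mem' := fun {a} ha => M.neg_mem ha } with hS
  -- S is inverse closed
  have hSinv : ∀ x ∈ S, x⁻¹ ∈ S := by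
    intro x hx
    by_cases hx0 : x = 0
    · rw [hx0, inv_zero]; exact S.zero_mem
    · haveI : FiniteDimensional ↥E ↥M :=
        FiniteDimensional.span_of_finite _ (Set.finite_range _)
      have hxM : x ∈ M := hx
      let f : ↥M →ₗ[↥E] ↥M :=
        { toFun := fun m => ⟨(m : D) * x, hmul _ m.2 _ hxM⟩
          map_add' := fun a b => by ext; simp [add_mul]
          map_smul' := fun k m => by ext; simp [hsmul, mul_assoc] }
      have hinj : Function.Injective f := by
        intro a b hab
        have h := congrArg (Subtype.val) hab
        simp only [f, LinearMap.coe_mk, AddHom.coe_mk] at h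
        exact Subtype.ext (mul_right_cancel₀ hx0 h)
      obtain ⟨m, hm⟩ := LinearMap.injective_iff_surjective.mp hinj ⟨1, hone_mem⟩
      have hm1 : (m : D) * x = 1 := congrArg Subtype.val hm
      have : x⁻¹ = (m : D) := inv_eq_of_mul_eq_one_left hm1
      rw [this]
      exact m.2
  -- conclude
  have hrangeS : Set.range φ ⊆ (S : Set D) := by
    rintro - ⟨p, rfl⟩
    exact hrange p
  have htop : (⊤ : Subring D) ≤ S := h1 ▸ divClosure_le hrangeS hSinv
  rw [eq_top_iff]
  intro x hxt
  clear hxt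
  have hxM : x ∈ M := htop (Subring.mem_top x)
  -- every element of M lies in the closure
  induction hxM using Submodule.span_induction with
  | mem y hy =>
      rcases hy with ⟨q, rfl⟩
      exact Subring.subset_closure (Or.inr ⟨_, rfl⟩)
  | zero => exact Subring.zero_mem _
  | add y z _ _ hy hz => exact Subring.add_mem _ hy hz
  | smul k y _ hy =>
      rw [hsmul]
      exact Subring.mul_mem _ (Subring.subset_closure (Or.inl k.2)) hy
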